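/- Pieri-type rule: for a partition μ and a single-row partition (p), the Newell-Littlewood number N_{μ,(p),λ} equals the number of ways to remove (|μ|+p−|λ|)/2 boxes from μ, no two in the same column, and then add (|λ|+p−|μ|)/2 boxes, no two in the same column, to obtain λ. -/

import Mathlib

open YoungDiagram

/-- An LR (Littlewood–Richardson) filling witnessing the Littlewood–Richardson
coefficient `c^lam_{μ,ν}`: a ballot (lattice-word) semistandard filling of the skew
shape `lam/μ` with content `ν`.  The entry in row `i`, column `j` is `T i j`;
entries are `≥ 1` on the cells of `lam/μ` and `0` elsewhere. -/
structure LRFilling (μ ν lam : YoungDiagram) : Type where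
  sub : μ ≤ lam
  T : ℕ → ℕ → ℕ
  supp : ∀ i j, T i j ≠ 0 ↔ ((i, j) ∈ lam ∧ (i, j) ∉ μ)
  rows_weak : ∀ i j₁ j₂, j₁ ≤ j₂ → T i j₁ ≠ 0 → T i j₂ ≠ 0 → T i j₁ ≤ T i j₂
  cols_strict : ∀ i₁ i₂ j, i₁ < i₂ → T i₁ j ≠ 0 → T i₂ j ≠ 0 → T i₁ j < T i₂ j
  content : ∀ k : ℕ, Nat.card {p : ℕ × ℕ // T p.1 p.2 = k + 1} = ν.rowLen k
  ballot : ∀ i j k : ℕ,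
    Nat.card {p : ℕ × ℕ // (p.1 < i ∨ (p.1 = i ∧ j ≤ p.2)) ∧ T p.1 p.2 = k + 2} ≤
      Nat.card {p : ℕ × ℕ // (p.1 < i ∨ (p.1 = i ∧ j ≤ p.2)) ∧ T p.1 p.2 = k + 1}

/-- The Littlewood–Richardson coefficient `c^lam_{μ,ν}`. -/
noncomputable def lrCoeff (μ ν lam : YoungDiagram) : ℕ := Nat.card (LRFilling μ ν lam)

/-- The Newell–Littlewood number
`N_{μ,ν,lam} = Σ_{α,β,γ} c^μ_{α,β} c^ν_{α,γ} c^lam_{β,γ}`,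
realized as the cardinality of the set of triples of LR fillings over all `α,β,γ`. -/
noncomputable def NL (μ ν lam : YoungDiagram) : ℕ :=
  Nat.card (Σ α β γ : YoungDiagram,
    (LRFilling α β μ × LRFilling α γ ν × LRFilling β γ lam))


/-- The single-row Young diagram with `p` boxes. -/
def rowDiagram (p : ℕ) : YoungDiagram :=
  YoungDiagram.ofRowLens [p] (List.pairwise_singleton _ _).sortedGE

/-- `μ/β` is a horizontal strip (no two boxes in the same column): `β ⊆ μ` and
`μ_{i+1} ≤ β_i` for all `i`. -/
def IsHorizontalStrip (β μ : YoungDiagram) : Prop :=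
  β ≤ μ ∧ ∀ i, μ.rowLen (i + 1) ≤ β.rowLen i


theorem mem_rowDiagram {p : ℕ} {c : ℕ × ℕ} : c ∈ rowDiagram p ↔ c.1 = 0 ∧ c.2 < p := by
  rw [rowDiagram, mem_ofRowLens]
  constructor
  · rintro ⟨h1, h2⟩
    simp only [List.length_singleton] at h1
    interval_cases h : c.1 <;> simp_all
  · rintro ⟨h1, h2⟩
    exact ⟨by simp [h1], by simpa [h1] using h2⟩

theorem rowLen_eq_of {μ : YoungDiagram} {i n : ℕ} (h : ∀ j, (i, j) ∈ μ ↔ j < n) :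
    μ.rowLen i = n := by
  have h2 : ∀ j, j < μ.rowLen i ↔ j < n := fun j => by rw [← mem_iff_lt_rowLen, h]
  by_contra hne
  rcases Nat.lt_or_ge (μ.rowLen i) n with hlt | hge
  · exact absurd ((h2 (μ.rowLen i)).2 hlt) (lt_irrefl _)
  · have : n < μ.rowLen i := lt_of_le_of_ne hge (fun e => hne e.symm)
    exact absurd ((h2 n).1 this) (lt_irrefl _)

theorem rowDiagram_rowLen_zero (p : ℕ) : (rowDiagram p).rowLen 0 = p :=
  rowLen_eq_of (fun j => by simp [mem_rowDiagram])

theorem rowDiagram_rowLen_succ (p k : ℕ) : (rowDiagram p).rowLen (k + 1) = 0 :=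
  rowLen_eq_of (fun j => by simp [mem_rowDiagram])

theorem eq_rowDiagram {μ : YoungDiagram} {p : ℕ} (h0 : μ.rowLen 0 = p)
    (hs : ∀ k, μ.rowLen (k + 1) = 0) : μ = rowDiagram p := by
  ext ⟨i, j⟩
  rw [mem_cells, mem_cells, mem_rowDiagram, mem_iff_lt_rowLen]
  cases i with
  | zero => simp [h0]
  | succ k => simp [hs k]

theorem rowDiagram_cells (p : ℕ) :
    (rowDiagram p).cells = ({0} : Finset ℕ) ×ˢ Finset.range p := by
  ext ⟨i, j⟩
  simp only [mem_cells, mem_rowDiagram, Finset.mem_product, Finset.mem_singleton, Finset.mem_range]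

theorem rowDiagram_card (p : ℕ) : (rowDiagram p).card = p := by
  rw [YoungDiagram.card, rowDiagram_cells]; simp

theorem card_mono {β μ : YoungDiagram} (h : β ≤ μ) : β.card ≤ μ.card :=
  Finset.card_le_card (YoungDiagram.cells_subset_iff.2 h)

theorem rowLen_mono {β μ : YoungDiagram} (h : β ≤ μ) (i : ℕ) : β.rowLen i ≤ μ.rowLen i := by
  by_contra hc
  push_neg at hc
  exact absurd (h (mem_iff_lt_rowLen.2 hc : (i, μ.rowLen i) ∈ β))
    (by simp [mem_iff_lt_rowLen])

theorem le_of_rowLen_le {β μ : YoungDiagram} (h : ∀ i, β.rowLen i ≤ μ.rowLen i) : β ≤ μ := by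
  intro c hc
  obtain ⟨i, j⟩ := c
  have : (i, j) ∈ β := hc
  rw [mem_iff_lt_rowLen] at this
  exact (mem_iff_lt_rowLen.2 (lt_of_lt_of_le this (h i)) : (i,j) ∈ μ)

theorem rowLen_zero_of_le {μ : YoungDiagram} {n m : ℕ} (h : μ.rowLen n = 0) (hnm : n ≤ m) :
    μ.rowLen m = 0 := Nat.le_zero.1 (h ▸ μ.rowLen_anti n m hnm)

theorem card_eq_sum_rowLens' {μ : YoungDiagram} {n : ℕ} (h : μ.rowLen n = 0) :
    μ.card = ∑ i ∈ Finset.range n, μ.rowLen i := by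
  have hcells : μ.cells = (Finset.range n).biUnion (fun i => μ.row i) := by
    ext ⟨i, j⟩
    simp only [Finset.mem_biUnion, Finset.mem_range, mem_row_iff, mem_cells]
    constructor
    · intro hm
      refine ⟨i, ?_, hm, rfl⟩
      by_contra hni
      push_neg at hni
      rw [mem_iff_lt_rowLen, rowLen_zero_of_le h hni] at hm
      omega
    · rintro ⟨a, _, hm, rfl⟩; exact hm
  rw [YoungDiagram.card, hcells, Finset.card_biUnion]
  · exact Finset.sum_congr rfl fun i _ => (μ.rowLen_eq_card).symm
  · intro a _ b _ hab
    simp only [Finset.disjoint_left, mem_row_iff]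
    rintro c ⟨_, h2⟩ ⟨_, h3⟩
    subst h2
    exact hab h3

theorem down_closed_mem_iff {s : Finset ℕ} (h : ∀ m n : ℕ, m ≤ n → n ∈ s → m ∈ s) :
    ∀ j, j ∈ s ↔ j < s.card := by
  intro j
  constructor
  · intro hj
    by_contra hlt
    push_neg at hlt
    have hsub : Finset.range (j + 1) ⊆ s := fun m hm =>
      h m j (by simpa using Nat.lt_succ_iff.1 (Finset.mem_range.1 hm)) hj
    have := Finset.card_le_card hsub
    simp only [Finset.card_range] at this
    omega
  · intro hj
    by_contra hj'
    have hsub : s ⊆ Finset.range j := by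
      intro n hn
      rw [Finset.mem_range]
      by_contra h'
      push_neg at h'
      exact hj' (h j n h' hn)
    have := Finset.card_le_card hsub
    simp only [Finset.card_range] at this
    omega

theorem nat_card_eq_filter (P : ℕ × ℕ → Prop) [DecidablePred P] (s : Finset (ℕ × ℕ))
    (h : ∀ p, P p → p ∈ s) : Nat.card {p : ℕ × ℕ // P p} = (s.filter P).card := by
  have hset : {p : ℕ × ℕ | P p} = ↑(s.filter P) := by
    ext p
    simp only [Set.mem_setOf_eq, Finset.coe_filter, Set.mem_setOf_eq]
    exact ⟨fun hp => ⟨h p hp, hp⟩, fun hp => hp.2⟩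
  have : Nat.card {p : ℕ × ℕ // P p} = ({p : ℕ × ℕ | P p}).ncard := by
    rw [← Nat.card_coe_set_eq]
    rfl
  rw [this, hset, Set.ncard_coe_finset]

namespace LRFilling

variable {μ ν lam : YoungDiagram}

theorem ext_T {F G : LRFilling μ ν lam} (h : F.T = G.T) : F = G := by
  cases F; cases G; cases h; rfl

/-- Any collection of cells on which `T` is nonzero is finite. -/
theorem finite_of_ne_zero (F : LRFilling μ ν lam) (Q : ℕ × ℕ → Prop)
    (h : ∀ p, Q p → F.T p.1 p.2 ≠ 0) : Finite {p : ℕ × ℕ // Q p} := by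
  have hsub : {p : ℕ × ℕ | Q p} ⊆ ↑lam.cells := by
    intro p hp
    exact Finset.mem_coe.2 ((mem_cells _).2 ((F.supp p.1 p.2).1 (h p hp)).1)
  exact (Set.Finite.subset lam.cells.finite_toSet hsub).to_subtype

theorem nonempty_of_mem {Q : ℕ × ℕ → Prop} {p : ℕ × ℕ} (hp : Q p) :
    Nonempty {p : ℕ × ℕ // Q p} := ⟨⟨p, hp⟩⟩

/-- Ballot plus semistandardness forces entries in row `i` to be at most `i + 1`. -/
theorem le_row_succ (F : LRFilling μ ν lam) : ∀ i j, F.T i j ≤ i + 1 := by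
  intro i
  induction i using Nat.strong_induction_on with
  | _ i IH =>
  intro j
  by_contra hc
  push_neg at hc
  obtain ⟨m, hm⟩ : ∃ m, F.T i j = m := ⟨_, rfl⟩
  have hm2 : i + 2 ≤ m := by omega
  have hball := F.ballot i j (m - 2)
  have e2 : m - 2 + 2 = m := by omega
  have e1 : m - 2 + 1 = m - 1 := by omega
  rw [e2, e1] at hball
  have hfin1 : Finite {p : ℕ × ℕ // (p.1 < i ∨ (p.1 = i ∧ j ≤ p.2)) ∧ F.T p.1 p.2 = m} :=
    F.finite_of_ne_zero _ (fun p hp => by omega)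
  have hfin2 : Finite {p : ℕ × ℕ // (p.1 < i ∨ (p.1 = i ∧ j ≤ p.2)) ∧ F.T p.1 p.2 = m - 1} :=
    F.finite_of_ne_zero _ (fun p hp => by omega)
  have hne : Nonempty {p : ℕ × ℕ // (p.1 < i ∨ (p.1 = i ∧ j ≤ p.2)) ∧ F.T p.1 p.2 = m} :=
    nonempty_of_mem (p := (i, j)) ⟨Or.inr ⟨rfl, le_refl _⟩, hm⟩
  have hpos : 0 < Nat.card {p : ℕ × ℕ // (p.1 < i ∨ (p.1 = i ∧ j ≤ p.2)) ∧ F.T p.1 p.2 = m} :=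
    Nat.card_pos
  have hpos2 : 0 < Nat.card {p : ℕ × ℕ // (p.1 < i ∨ (p.1 = i ∧ j ≤ p.2)) ∧ F.T p.1 p.2 = m - 1} := by
    omega
  have hne2 : Nonempty {p : ℕ × ℕ // (p.1 < i ∨ (p.1 = i ∧ j ≤ p.2)) ∧ F.T p.1 p.2 = m - 1} := by
    rcases Nat.card_pos_iff.1 hpos2 with ⟨h1, _⟩
    exact h1
  obtain ⟨⟨⟨r, c⟩, hr, hT⟩⟩ := hne2
  have hT' : F.T r c = m - 1 := hT
  clear hT
  rcases hr with hlt | ⟨heq, hjc⟩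
  · have h9 := IH r hlt c
    omega
  · obtain rfl : r = i := heq
    have h8 : F.T r j ≠ 0 := by omega
    have h9 : F.T r c ≠ 0 := by omega
    have := F.rows_weak r j c hjc h8 h9
    omega

end LRFilling

namespace LRFilling

/-! ### Content a single row -/

section ContentRow

variable {β lam : YoungDiagram} {c : ℕ}

theorem card_pos_of_mem {Q : ℕ × ℕ → Prop} (hfin : Finite {p : ℕ × ℕ // Q p})
    {p : ℕ × ℕ} (hp : Q p) : 0 < Nat.card {p : ℕ × ℕ // Q p} :=
  @Nat.card_pos _ ⟨⟨p, hp⟩⟩ hfin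

theorem rowContent_T_le_one (F : LRFilling β (rowDiagram c) lam) (i j : ℕ) : F.T i j ≤ 1 := by
  by_contra h
  push_neg at h
  obtain ⟨m, hm⟩ : ∃ m, F.T i j = m := ⟨_, rfl⟩
  have h2 : 2 ≤ m := by omega
  have hcont := F.content (m - 1)
  rw [show m - 1 + 1 = m by omega] at hcont
  rw [show (rowDiagram c).rowLen (m - 1) = 0 by
    rw [show m - 1 = m - 2 + 1 by omega]; exact rowDiagram_rowLen_succ c (m - 2)] at hcont
  have hfin : Finite {p : ℕ × ℕ // F.T p.1 p.2 = m} :=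
    F.finite_of_ne_zero _ (fun p hp => by omega)
  have := card_pos_of_mem hfin (p := (i, j)) hm
  omega

theorem rowContent_T_eq (F : LRFilling β (rowDiagram c) lam) (i j : ℕ) :
    F.T i j = if (i, j) ∈ lam ∧ (i, j) ∉ β then 1 else 0 := by
  by_cases h : (i, j) ∈ lam ∧ (i, j) ∉ β
  · rw [if_pos h]
    have h1 : F.T i j ≠ 0 := (F.supp i j).2 h
    have h2 := F.rowContent_T_le_one i j
    omega
  · rw [if_neg h]
    by_contra h0
    exact h ((F.supp i j).1 h0)

theorem rowContent_strip (F : LRFilling β (rowDiagram c) lam) : IsHorizontalStrip β lam := by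
  refine ⟨F.sub, fun i => ?_⟩
  by_contra hlt
  push_neg at hlt
  have hmem : (i + 1, β.rowLen i) ∈ lam := mem_iff_lt_rowLen.2 hlt
  have hnotβ : (i, β.rowLen i) ∉ β := by simp [mem_iff_lt_rowLen]
  have hnotβ2 : (i + 1, β.rowLen i) ∉ β := fun hm =>
    hnotβ (β.up_left_mem (by omega) le_rfl hm)
  have hT2 : F.T (i + 1) (β.rowLen i) ≠ 0 := (F.supp _ _).2 ⟨hmem, hnotβ2⟩
  have hmem1 : (i, β.rowLen i) ∈ lam := lam.up_left_mem (by omega) le_rfl hmem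
  have hT1 : F.T i (β.rowLen i) ≠ 0 := (F.supp _ _).2 ⟨hmem1, hnotβ⟩
  have hlt2 := F.cols_strict i (i + 1) (β.rowLen i) (by omega) hT1 hT2
  have b1 := F.rowContent_T_le_one i (β.rowLen i)
  have b2 := F.rowContent_T_le_one (i + 1) (β.rowLen i)
  omega

theorem rowContent_card (F : LRFilling β (rowDiagram c) lam) : lam.card = β.card + c := by
  have h0 := F.content 0
  rw [rowDiagram_rowLen_zero] at h0
  rw [nat_card_eq_filter _ lam.cells
    (fun p hp => (mem_cells _).2 ((F.supp p.1 p.2).1 (by omega)).1)] at h0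
  have hfe : lam.cells.filter (fun p => F.T p.1 p.2 = 1) = lam.cells \ β.cells := by
    ext q
    obtain ⟨i, j⟩ := q
    rw [Finset.mem_filter, Finset.mem_sdiff, mem_cells, mem_cells]
    rw [F.rowContent_T_eq i j]
    by_cases h : (i, j) ∈ lam ∧ (i, j) ∉ β
    · rw [if_pos h]; exact ⟨fun _ => h, fun _ => ⟨h.1, rfl⟩⟩
    · rw [if_neg h]
      constructor
      · rintro ⟨_, h0⟩; omega
      · intro hh; exact absurd hh h
  rw [hfe, Finset.card_sdiff_of_subset (YoungDiagram.cells_subset_iff.2 F.sub)] at h0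
  have h9 := card_mono F.sub
  have e1 : lam.card = lam.cells.card := rfl
  have e2 : β.card = β.cells.card := rfl
  omega

theorem rowContent_unique {β ν lam : YoungDiagram} {c : ℕ} (hν : ν = rowDiagram c)
    (F G : LRFilling β ν lam) : F = G := by
  subst hν
  apply ext_T
  funext i j
  rw [F.rowContent_T_eq, G.rowContent_T_eq]

/-- Indicator entries for a horizontal strip filling. -/
noncomputable def stripT (β lam : YoungDiagram) : ℕ → ℕ → ℕ := fun i j =>
  if (i, j) ∈ lam ∧ (i, j) ∉ β then 1 else 0

theorem stripT_le_one (β lam : YoungDiagram) (i j : ℕ) : stripT β lam i j ≤ 1 := by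
  rw [stripT]; split_ifs <;> omega

theorem stripT_ne_zero_iff (β lam : YoungDiagram) (i j : ℕ) :
    stripT β lam i j ≠ 0 ↔ ((i, j) ∈ lam ∧ (i, j) ∉ β) := by
  rw [stripT]; split_ifs with h <;> simp [h]

theorem stripT_eq_one_iff (β lam : YoungDiagram) (i j : ℕ) :
    stripT β lam i j = 1 ↔ ((i, j) ∈ lam ∧ (i, j) ∉ β) := by
  rw [stripT]; split_ifs with h <;> simp [h]

/-- The canonical filling of a horizontal strip by all `1`s. -/
noncomputable def ofStrip {β lam : YoungDiagram} {c : ℕ} (h : IsHorizontalStrip β lam)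
    (hc : lam.card = β.card + c) : LRFilling β (rowDiagram c) lam := by
  refine
  { sub := h.1
    T := stripT β lam
    supp := stripT_ne_zero_iff β lam
    rows_weak := fun i j₁ j₂ hj h1 h2 => by
      have b1 := stripT_le_one β lam i j₁
      have b2 := stripT_le_one β lam i j₂
      rw [stripT_ne_zero_iff] at h1 h2
      have e2 : stripT β lam i j₂ = 1 := (stripT_eq_one_iff β lam i j₂).2 h2
      omega
    cols_strict := fun i₁ i₂ j hi h1 h2 => by
      exfalso
      rw [stripT_ne_zero_iff] at h1 h2
      have hm : (i₁ + 1, j) ∈ lam := lam.up_left_mem (by omega) le_rfl h2.1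
      rw [mem_iff_lt_rowLen] at hm
      have h3 := h.2 i₁
      exact h1.2 (mem_iff_lt_rowLen.2 (by omega))
    content := fun k => ?_
    ballot := fun i j k => ?_ }
  · cases k with
    | zero =>
      rw [rowDiagram_rowLen_zero]
      rw [nat_card_eq_filter _ lam.cells (fun q hq => by
        rw [show (0 : ℕ) + 1 = 1 from rfl, stripT_eq_one_iff] at hq
        exact (mem_cells _).2 hq.1)]
      have hfe : (lam.cells.filter fun q : ℕ × ℕ => stripT β lam q.1 q.2 = 0 + 1) =
          lam.cells \ β.cells := by
        ext q
        rw [Finset.mem_filter, Finset.mem_sdiff, mem_cells, mem_cells,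
          show (0 : ℕ) + 1 = 1 from rfl, stripT_eq_one_iff]
        constructor
        · rintro ⟨_, hq⟩; exact hq
        · intro hq; exact ⟨hq.1, hq⟩
      rw [hfe, Finset.card_sdiff_of_subset (YoungDiagram.cells_subset_iff.2 h.1)]
      have h9 := card_mono h.1
      have e1 : lam.card = lam.cells.card := rfl
      have e2 : β.card = β.cells.card := rfl
      omega
    | succ k =>
      rw [rowDiagram_rowLen_succ]
      have hemp : IsEmpty {q : ℕ × ℕ // stripT β lam q.1 q.2 = k + 1 + 1} := by
        refine ⟨fun ⟨q, hq⟩ => ?_⟩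
        have := stripT_le_one β lam q.1 q.2
        omega
      exact Nat.card_of_isEmpty
  · have hemp : IsEmpty {q : ℕ × ℕ // (q.1 < i ∨ (q.1 = i ∧ j ≤ q.2)) ∧
        stripT β lam q.1 q.2 = k + 2} := by
      refine ⟨fun ⟨q, hq⟩ => ?_⟩
      have := stripT_le_one β lam q.1 q.2
      have := hq.2
      omega
    rw [Nat.card_of_isEmpty (α := {q : ℕ × ℕ // (q.1 < i ∨ (q.1 = i ∧ j ≤ q.2)) ∧
        stripT β lam q.1 q.2 = k + 2})]
    omega

end ContentRow

/-! ### Outer shape a single row -/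

section ShapeRow

variable {α γ : YoungDiagram} {p : ℕ}

theorem rowShape_row0 (F : LRFilling α γ (rowDiagram p)) {i j : ℕ} (h : F.T i j ≠ 0) :
    i = 0 := by
  have := ((F.supp i j).1 h).1
  rw [mem_rowDiagram] at this
  exact this.1

theorem rowShape_T_le_one (F : LRFilling α γ (rowDiagram p)) (i j : ℕ) : F.T i j ≤ 1 := by
  by_contra h
  push_neg at h
  obtain ⟨m, hm⟩ : ∃ m, F.T i j = m := ⟨_, rfl⟩
  have h2 : 2 ≤ m := by omega
  have hne0 : F.T i j ≠ 0 := by omega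
  have hi0 : i = 0 := F.rowShape_row0 hne0
  subst hi0
  have hball := F.ballot 0 j (m - 2)
  rw [show m - 2 + 2 = m by omega, show m - 2 + 1 = m - 1 by omega] at hball
  have hfin : Finite {q : ℕ × ℕ // (q.1 < 0 ∨ (q.1 = 0 ∧ j ≤ q.2)) ∧ F.T q.1 q.2 = m} :=
    F.finite_of_ne_zero _ (fun q hq => by have := hq.2; omega)
  have hpos := card_pos_of_mem hfin (p := (0, j)) ⟨Or.inr ⟨rfl, le_refl j⟩, hm⟩
  have hemp : IsEmpty {q : ℕ × ℕ // (q.1 < 0 ∨ (q.1 = 0 ∧ j ≤ q.2)) ∧ F.T q.1 q.2 = m - 1} := by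
    refine ⟨fun ⟨⟨r, c'⟩, hr, hT⟩ => ?_⟩
    have hT' : F.T r c' = m - 1 := hT
    obtain ⟨rfl, hjc⟩ : r = 0 ∧ j ≤ c' := by
      rcases hr with h' | h'
      · omega
      · exact h'
    have := F.rows_weak 0 j c' hjc (by omega) (by omega)
    omega
  rw [Nat.card_of_isEmpty (α := {q : ℕ × ℕ //
      (q.1 < 0 ∨ (q.1 = 0 ∧ j ≤ q.2)) ∧ F.T q.1 q.2 = m - 1})] at hball
  omega

theorem rowShape_T_eq (F : LRFilling α γ (rowDiagram p)) (i j : ℕ) :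
    F.T i j = if (i, j) ∈ rowDiagram p ∧ (i, j) ∉ α then 1 else 0 := by
  by_cases h : (i, j) ∈ rowDiagram p ∧ (i, j) ∉ α
  · rw [if_pos h]
    have h1 : F.T i j ≠ 0 := (F.supp i j).2 h
    have h2 := F.rowShape_T_le_one i j
    omega
  · rw [if_neg h]
    by_contra h0
    exact h ((F.supp i j).1 h0)

theorem rowShape_alpha (F : LRFilling α γ (rowDiagram p)) : α = rowDiagram (α.rowLen 0) := by
  apply eq_rowDiagram rfl
  intro k
  apply rowLen_eq_of
  intro j
  simp only [Nat.not_lt_zero, iff_false]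
  intro hm
  have h2 : (k + 1, j) ∈ rowDiagram p := F.sub hm
  rw [mem_rowDiagram] at h2
  omega

theorem rowShape_alpha_card (F : LRFilling α γ (rowDiagram p)) : α.card = α.rowLen 0 := by
  conv_lhs => rw [F.rowShape_alpha]
  rw [rowDiagram_card]

theorem rowShape_card_le (F : LRFilling α γ (rowDiagram p)) : α.card ≤ p :=
  (rowDiagram_card p) ▸ card_mono F.sub

theorem rowShape_gamma (F : LRFilling α γ (rowDiagram p)) :
    γ = rowDiagram (p - α.card) := by
  apply eq_rowDiagram
  · have h0 := F.content 0
    rw [nat_card_eq_filter _ (rowDiagram p).cells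
      (fun q hq => (mem_cells _).2 ((F.supp q.1 q.2).1 (by omega)).1)] at h0
    have hfe : ((rowDiagram p).cells.filter fun q : ℕ × ℕ => F.T q.1 q.2 = 0 + 1) =
        (rowDiagram p).cells \ α.cells := by
      ext q
      obtain ⟨i, j⟩ := q
      rw [Finset.mem_filter, Finset.mem_sdiff, mem_cells, mem_cells]
      rw [F.rowShape_T_eq i j]
      by_cases h : (i, j) ∈ rowDiagram p ∧ (i, j) ∉ α
      · rw [if_pos h]; exact ⟨fun _ => h, fun _ => ⟨h.1, rfl⟩⟩
      · rw [if_neg h]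
        constructor
        · rintro ⟨_, h0⟩; omega
        · intro hh; exact absurd hh h
    rw [hfe, Finset.card_sdiff_of_subset (YoungDiagram.cells_subset_iff.2 F.sub)] at h0
    rw [← h0]
    have h9 := F.rowShape_card_le
    have e1 : (rowDiagram p).cells.card = p := by
      rw [show (rowDiagram p).cells.card = (rowDiagram p).card from rfl, rowDiagram_card]
    have e2 : α.card = α.cells.card := rfl
    omega
  · intro k
    have hk := F.content (k + 1)
    have hemp : IsEmpty {q : ℕ × ℕ // F.T q.1 q.2 = k + 1 + 1} := by
      refine ⟨fun ⟨q, hq⟩ => ?_⟩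
      have := F.rowShape_T_le_one q.1 q.2
      omega
    rw [Nat.card_of_isEmpty (α := {q : ℕ × ℕ // F.T q.1 q.2 = k + 1 + 1})] at hk
    exact hk.symm

theorem rowShape_unique (F G : LRFilling α γ (rowDiagram p)) : F = G := by
  apply ext_T
  funext i j
  rw [F.rowShape_T_eq, G.rowShape_T_eq]

/-- The canonical filling of `(p)/(a)` by all `1`s, with content `(p-a)`. -/
noncomputable def rowRow {a p : ℕ} (hap : a ≤ p) :
    LRFilling (rowDiagram a) (rowDiagram (p - a)) (rowDiagram p) := by
  apply ofStrip
  · constructor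
    · intro q hq
      have h1 : q ∈ rowDiagram a := hq
      rw [mem_rowDiagram] at h1
      exact (show q ∈ rowDiagram p from mem_rowDiagram.2 ⟨h1.1, by omega⟩)
    · intro i
      rw [rowDiagram_rowLen_succ]
      omega
  · rw [rowDiagram_card, rowDiagram_card]
    omega

end ShapeRow

end LRFilling

namespace LRFilling

/-! ### Inner (subtracted) shape a single row: structure of fillings of `μ/(a)` -/

section OuterRow

variable {a : ℕ} {β μ : YoungDiagram}

theorem mem_image_pair {s : Finset ℕ} {v r j : ℕ}
    (h : (r, j) ∈ s.image (fun x => (v, x))) : v = r ∧ j ∈ s := by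
  obtain ⟨x, hx, e⟩ := Finset.mem_image.1 h
  have e1 : v = r := congrArg Prod.fst e
  have e2 : x = j := congrArg Prod.snd e
  exact ⟨e1, e2 ▸ hx⟩

theorem outer_supp (F : LRFilling (rowDiagram a) β μ) (i j : ℕ) :
    F.T i j ≠ 0 ↔ ((i, j) ∈ μ ∧ (i = 0 → a ≤ j)) := by
  rw [F.supp]
  constructor
  · rintro ⟨h1, h2⟩
    refine ⟨h1, fun h0 => ?_⟩
    by_contra hja
    push_neg at hja
    exact h2 (mem_rowDiagram.2 ⟨h0, by omega⟩)
  · rintro ⟨h1, h2⟩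
    refine ⟨h1, fun hm => ?_⟩
    rw [mem_rowDiagram] at hm
    have := h2 hm.1
    omega

theorem outer_a_le (F : LRFilling (rowDiagram a) β μ) : a ≤ μ.rowLen 0 := by
  rcases Nat.eq_zero_or_pos a with h | h
  · omega
  · have hm : (0, a - 1) ∈ rowDiagram a := mem_rowDiagram.2 ⟨rfl, by omega⟩
    have h2 : (0, a - 1) ∈ μ := F.sub hm
    rw [mem_iff_lt_rowLen] at h2
    omega

theorem outer_ge (F : LRFilling (rowDiagram a) β μ) : ∀ i j, F.T i j ≠ 0 → i ≤ F.T i j := by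
  intro i
  induction i with
  | zero => intro j h; omega
  | succ i IH =>
    intro j h
    have hmem : (i + 1, j) ∈ μ := ((F.outer_supp _ _).1 h).1
    have hmem' : (i, j) ∈ μ := μ.up_left_mem (by omega) le_rfl hmem
    by_cases h0 : i = 0 ∧ j < a
    · obtain ⟨rfl, _⟩ := h0
      omega
    · have hne : F.T i j ≠ 0 := (F.outer_supp i j).2 ⟨hmem', fun hi => by omega⟩
      have h1 := IH j hne
      have h2 := F.cols_strict i (i + 1) j (by omega) hne h
      omega

/-- The number of entries equal to `i` in row `i` (interesting only for `i ≥ 1`). -/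
noncomputable def rowCount (F : LRFilling (rowDiagram a) β μ) (i : ℕ) : ℕ :=
  ((Finset.range (μ.rowLen i)).filter (fun j => F.T i j = i)).card

theorem rowCount_le (F : LRFilling (rowDiagram a) β μ) (i : ℕ) :
    F.rowCount i ≤ μ.rowLen i := by
  have := Finset.card_le_card
    (Finset.filter_subset (fun j => F.T i j = i) (Finset.range (μ.rowLen i)))
  simpa [rowCount, Finset.card_range] using this

theorem outer_step (F : LRFilling (rowDiagram a) β μ) (i : ℕ) (hi : i ≠ 0) (j : ℕ) :
    F.T i j = i ↔ j < F.rowCount i := by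
  have hdc : ∀ m n : ℕ, m ≤ n →
      n ∈ (Finset.range (μ.rowLen i)).filter (fun j => F.T i j = i) →
      m ∈ (Finset.range (μ.rowLen i)).filter (fun j => F.T i j = i) := by
    intro m n hmn hn
    rw [Finset.mem_filter, Finset.mem_range] at hn
    obtain ⟨hn1, hn2⟩ := hn
    rw [Finset.mem_filter, Finset.mem_range]
    have hmμ : (i, m) ∈ μ := mem_iff_lt_rowLen.2 (by omega)
    have hmne : F.T i m ≠ 0 := (F.outer_supp i m).2 ⟨hmμ, fun h0 => absurd h0 hi⟩
    have hnne : F.T i n ≠ 0 := by omega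
    have hw := F.rows_weak i m n hmn hmne hnne
    have hg := F.outer_ge i m hmne
    exact ⟨by omega, by omega⟩
  have hiff := down_closed_mem_iff hdc
  rw [rowCount]
  constructor
  · intro h
    have hne : F.T i j ≠ 0 := by omega
    have hj : j < μ.rowLen i := mem_iff_lt_rowLen.1 ((F.outer_supp i j).1 hne).1
    exact (hiff j).1 (Finset.mem_filter.2 ⟨Finset.mem_range.2 hj, h⟩)
  · intro h
    exact (Finset.mem_filter.1 ((hiff j).2 h)).2

/-- Threshold: in row `v`, entries equal `v` strictly before the threshold and `v+1` from
the threshold on. -/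
noncomputable def thr (F : LRFilling (rowDiagram a) β μ) (v : ℕ) : ℕ :=
  if v = 0 then a else F.rowCount v

theorem thr_zero (F : LRFilling (rowDiagram a) β μ) : F.thr 0 = a := rfl

theorem thr_succ (F : LRFilling (rowDiagram a) β μ) (v : ℕ) :
    F.thr (v + 1) = F.rowCount (v + 1) := rfl

theorem thr_le (F : LRFilling (rowDiagram a) β μ) (v : ℕ) : F.thr v ≤ μ.rowLen v := by
  cases v with
  | zero => exact F.outer_a_le
  | succ v => exact F.rowCount_le (v + 1)

/-- Complete description of where value `v + 1` appears. -/
theorem outer_val_iff (F : LRFilling (rowDiagram a) β μ) (v r j : ℕ) :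
    F.T r j = v + 1 ↔
      ((r = v ∧ F.thr v ≤ j ∧ j < μ.rowLen v) ∨ (r = v + 1 ∧ j < F.rowCount (v + 1))) := by
  constructor
  · intro hT
    have hne : F.T r j ≠ 0 := by omega
    have hub := F.le_row_succ r j
    have hge := F.outer_ge r j hne
    have hr : r = v ∨ r = v + 1 := by omega
    rcases hr with rfl | rfl
    · left
      refine ⟨rfl, ?_, mem_iff_lt_rowLen.1 ((F.outer_supp r j).1 hne).1⟩
      cases r with
      | zero =>
        rw [thr_zero]
        exact ((F.outer_supp 0 j).1 hne).2 rfl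
      | succ r' =>
        rw [thr_succ]
        have hstep := F.outer_step (r' + 1) (Nat.succ_ne_zero r') j
        by_contra hcon
        push_neg at hcon
        have : F.T (r' + 1) j = r' + 1 := hstep.2 (by omega)
        omega
    · right
      exact ⟨rfl, (F.outer_step (v + 1) (Nat.succ_ne_zero v) j).1 (by omega)⟩
  · rintro (⟨rfl, h1, h2⟩ | ⟨rfl, h1⟩)
    · have hmem : (r, j) ∈ μ := mem_iff_lt_rowLen.2 h2
      have hne : F.T r j ≠ 0 := (F.outer_supp r j).2 ⟨hmem, fun h0 => by
        rw [h0, F.thr_zero] at h1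
        exact h1⟩
      have hub := F.le_row_succ r j
      have hge := F.outer_ge r j hne
      cases r with
      | zero => omega
      | succ r' =>
        have hstep := F.outer_step (r' + 1) (Nat.succ_ne_zero r') j
        rw [thr_succ] at h1
        omega
    · exact (F.outer_step (v + 1) (Nat.succ_ne_zero v) j).2 h1

theorem outer_content (F : LRFilling (rowDiagram a) β μ) (v : ℕ) :
    β.rowLen v + F.thr v = μ.rowLen v + F.rowCount (v + 1) := by
  have hcont := F.content v
  rw [nat_card_eq_filter _ μ.cells
    (fun q hq => (mem_cells _).2 ((F.supp q.1 q.2).1 (by omega)).1)] at hcont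
  have hfe : (μ.cells.filter fun q : ℕ × ℕ => F.T q.1 q.2 = v + 1) =
      ((Finset.Ico (F.thr v) (μ.rowLen v)).image (fun j => (v, j))) ∪
      ((Finset.range (F.rowCount (v + 1))).image (fun j => (v + 1, j))) := by
    ext ⟨r, j⟩
    rw [Finset.mem_filter, Finset.mem_union, mem_cells]
    constructor
    · rintro ⟨hmem, hT⟩
      rcases (F.outer_val_iff v r j).1 hT with ⟨rfl, h1, h2⟩ | ⟨rfl, h1⟩
      · exact Or.inl (Finset.mem_image.2 ⟨j, Finset.mem_Ico.2 ⟨h1, h2⟩, rfl⟩)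
      · exact Or.inr (Finset.mem_image.2 ⟨j, Finset.mem_range.2 h1, rfl⟩)
    · intro h
      rcases h with h | h
      · obtain ⟨rfl, hj'⟩ := mem_image_pair h
        rw [Finset.mem_Ico] at hj'
        exact ⟨mem_iff_lt_rowLen.2 hj'.2,
          (F.outer_val_iff v v j).2 (Or.inl ⟨rfl, hj'.1, hj'.2⟩)⟩
      · obtain ⟨rfl, hj'⟩ := mem_image_pair h
        rw [Finset.mem_range] at hj'
        have hjlt : j < μ.rowLen (v + 1) := lt_of_lt_of_le hj' (F.rowCount_le (v + 1))
        exact ⟨mem_iff_lt_rowLen.2 hjlt,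
          (F.outer_val_iff v (v + 1) j).2 (Or.inr ⟨rfl, hj'⟩)⟩
  rw [hfe, Finset.card_union_of_disjoint, Finset.card_image_of_injective _
      (fun x y h => congrArg Prod.snd h),
    Finset.card_image_of_injective _ (fun x y h => congrArg Prod.snd h),
    Nat.card_Ico, Finset.card_range] at hcont
  · have h1 := F.thr_le v
    omega
  · rw [Finset.disjoint_left]
    rintro ⟨r, j⟩ h1 h2
    have e1 := (mem_image_pair h1).1
    have e2 := (mem_image_pair h2).1
    omega

theorem outer_count_le_thr (F : LRFilling (rowDiagram a) β μ) (v : ℕ) :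
    F.rowCount (v + 1) ≤ F.thr v := by
  by_contra hc
  push_neg at hc
  obtain ⟨j, hj1, hj2⟩ : ∃ j, j < F.rowCount (v + 1) ∧ F.thr v ≤ j :=
    ⟨F.thr v, by omega, le_rfl⟩
  have hT2 : F.T (v + 1) j = v + 1 := (F.outer_step (v + 1) (Nat.succ_ne_zero v) j).2 hj1
  have hmem2 : (v + 1, j) ∈ μ := ((F.outer_supp (v + 1) j).1 (by omega)).1
  have hmem1 : (v, j) ∈ μ := μ.up_left_mem (by omega) le_rfl hmem2
  have hne1 : F.T v j ≠ 0 := by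
    refine (F.outer_supp v j).2 ⟨hmem1, fun h0 => ?_⟩
    rw [h0] at hj2
    rw [show F.thr 0 = a from F.thr_zero] at hj2
    exact hj2
  have hlt := F.cols_strict v (v + 1) j (by omega) hne1 (by omega)
  have hge := F.outer_ge v j hne1
  have heq : F.T v j = v := by omega
  cases v with
  | zero => omega
  | succ v' =>
    have := (F.outer_step (v' + 1) (Nat.succ_ne_zero v') j).1 heq
    rw [F.thr_succ] at hj2
    omega

theorem outer_strip_ineq (F : LRFilling (rowDiagram a) β μ) (v : ℕ) :
    μ.rowLen (v + 1) ≤ β.rowLen v := by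
  have hball := F.ballot (v + 1) (F.rowCount (v + 1)) v
  have hL : Nat.card {q : ℕ × ℕ //
      (q.1 < v + 1 ∨ (q.1 = v + 1 ∧ F.rowCount (v + 1) ≤ q.2)) ∧ F.T q.1 q.2 = v + 2} =
      μ.rowLen (v + 1) - F.rowCount (v + 1) := by
    rw [nat_card_eq_filter _ μ.cells
      (fun q hq => (mem_cells _).2 ((F.supp q.1 q.2).1 (by omega)).1)]
    have hfe : (μ.cells.filter fun q : ℕ × ℕ =>
        (q.1 < v + 1 ∨ (q.1 = v + 1 ∧ F.rowCount (v + 1) ≤ q.2)) ∧ F.T q.1 q.2 = v + 2) =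
        (Finset.Ico (F.rowCount (v + 1)) (μ.rowLen (v + 1))).image (fun j => (v + 1, j)) := by
      ext ⟨r, j⟩
      rw [Finset.mem_filter, mem_cells]
      constructor
      · rintro ⟨hmem, hreg, hT⟩
        rcases (F.outer_val_iff (v + 1) r j).1 hT with ⟨rfl, h1, h2⟩ | ⟨rfl, h1⟩
        · rw [F.thr_succ] at h1
          exact Finset.mem_image.2 ⟨j, Finset.mem_Ico.2 ⟨h1, h2⟩, rfl⟩
        · exfalso
          rcases hreg with h | h
          · omega
          · omega
      · intro h
        obtain ⟨rfl, hj'⟩ := mem_image_pair h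
        rw [Finset.mem_Ico] at hj'
        refine ⟨mem_iff_lt_rowLen.2 hj'.2, Or.inr ⟨rfl, hj'.1⟩, ?_⟩
        exact (F.outer_val_iff (v + 1) (v + 1) j).2
          (Or.inl ⟨rfl, by rw [F.thr_succ]; exact hj'.1, hj'.2⟩)
    rw [hfe, Finset.card_image_of_injective _ (fun x y h => congrArg Prod.snd h), Nat.card_Ico]
  have hR : Nat.card {q : ℕ × ℕ //
      (q.1 < v + 1 ∨ (q.1 = v + 1 ∧ F.rowCount (v + 1) ≤ q.2)) ∧ F.T q.1 q.2 = v + 1} =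
      μ.rowLen v - F.thr v := by
    rw [nat_card_eq_filter _ μ.cells
      (fun q hq => (mem_cells _).2 ((F.supp q.1 q.2).1 (by omega)).1)]
    have hfe : (μ.cells.filter fun q : ℕ × ℕ =>
        (q.1 < v + 1 ∨ (q.1 = v + 1 ∧ F.rowCount (v + 1) ≤ q.2)) ∧ F.T q.1 q.2 = v + 1) =
        (Finset.Ico (F.thr v) (μ.rowLen v)).image (fun j => (v, j)) := by
      ext ⟨r, j⟩
      rw [Finset.mem_filter, mem_cells]
      constructor
      · rintro ⟨hmem, hreg, hT⟩
        rcases (F.outer_val_iff v r j).1 hT with ⟨rfl, h1, h2⟩ | ⟨rfl, h1⟩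
        · exact Finset.mem_image.2 ⟨j, Finset.mem_Ico.2 ⟨h1, h2⟩, rfl⟩
        · exfalso
          rcases hreg with h | h
          · omega
          · omega
      · intro h
        obtain ⟨rfl, hj'⟩ := mem_image_pair h
        rw [Finset.mem_Ico] at hj'
        refine ⟨mem_iff_lt_rowLen.2 hj'.2, Or.inl (by omega), ?_⟩
        exact (F.outer_val_iff v v j).2 (Or.inl ⟨rfl, hj'.1, hj'.2⟩)
    rw [hfe, Finset.card_image_of_injective _ (fun x y h => congrArg Prod.snd h), Nat.card_Ico]
  rw [hL, hR] at hball
  have h1 := F.outer_content v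
  have h2 := F.thr_le v
  have h3 := F.rowCount_le (v + 1)
  omega

theorem outer_le (F : LRFilling (rowDiagram a) β μ) : β ≤ μ := by
  apply le_of_rowLen_le
  intro v
  have h1 := F.outer_content v
  have h2 := F.outer_count_le_thr v
  have h3 := F.thr_le v
  omega

theorem outer_strip (F : LRFilling (rowDiagram a) β μ) : IsHorizontalStrip β μ :=
  ⟨F.outer_le, F.outer_strip_ineq⟩

theorem outer_card (F : LRFilling (rowDiagram a) β μ) : μ.card = β.card + a := by
  obtain ⟨m, n, hm, hn⟩ : ∃ m n, m = μ.colLen 0 ∧ n = m + 1 := ⟨_, _, rfl, rfl⟩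
  have hn' : μ.colLen 0 < n := by omega
  have hμn : μ.rowLen n = 0 := by
    apply rowLen_eq_of
    intro j
    simp only [Nat.not_lt_zero, iff_false]
    intro hm
    rw [mem_iff_lt_colLen] at hm
    have := μ.colLen_anti 0 j (Nat.zero_le j)
    omega
  have hβn : β.rowLen n = 0 := Nat.le_zero.1 (hμn ▸ rowLen_mono F.outer_le n)
  rw [card_eq_sum_rowLens' hμn, card_eq_sum_rowLens' hβn]
  have hsum : ∀ N : ℕ, (∑ v ∈ Finset.range N, β.rowLen v) + (∑ v ∈ Finset.range N, F.thr v)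
      = (∑ v ∈ Finset.range N, μ.rowLen v) + ∑ v ∈ Finset.range N, F.rowCount (v + 1) := by
    intro N
    rw [← Finset.sum_add_distrib, ← Finset.sum_add_distrib]
    exact Finset.sum_congr rfl (fun v _ => F.outer_content v)
  have h1 := hsum n
  have hthr : (∑ v ∈ Finset.range n, F.thr v)
      = a + ∑ v ∈ Finset.range m, F.thr (v + 1) := by
    rw [hn, Finset.sum_range_succ']
    rw [thr_zero]
    omega
  have hthr2 : (∑ v ∈ Finset.range m, F.thr (v + 1))
      = ∑ v ∈ Finset.range m, F.rowCount (v + 1) :=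
    Finset.sum_congr rfl (fun v _ => F.thr_succ v)
  have hrc : (∑ v ∈ Finset.range n, F.rowCount (v + 1))
      = (∑ v ∈ Finset.range m, F.rowCount (v + 1)) + F.rowCount (m + 1) := by
    rw [hn, Finset.sum_range_succ]
  have hmn : F.rowCount (m + 1) = F.rowCount n := by rw [hn]
  have hrc0 : F.rowCount n = 0 := by
    rw [rowCount, hμn]
    simp
  omega

theorem outer_thr_eq (F G : LRFilling (rowDiagram a) β μ) : ∀ v, F.thr v = G.thr v := by
  intro v
  induction v with
  | zero => rw [thr_zero, thr_zero]
  | succ v IH =>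
    have h1 := F.outer_content v
    have h2 := G.outer_content v
    rw [thr_succ, thr_succ]
    omega

theorem outer_unique {α β μ : YoungDiagram} {a : ℕ} (hα : α = rowDiagram a)
    (F G : LRFilling α β μ) : F = G := by
  subst hα
  apply ext_T
  funext i j
  have hthr := outer_thr_eq F G (i + 1)
  rw [thr_succ, thr_succ] at hthr
  by_cases hsupp : (i, j) ∈ μ ∧ (i = 0 → a ≤ j)
  · have hF : F.T i j ≠ 0 := (F.outer_supp i j).2 hsupp
    have hG : G.T i j ≠ 0 := (G.outer_supp i j).2 hsupp
    have hFu := F.le_row_succ i j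
    have hGu := G.le_row_succ i j
    have hFg := F.outer_ge i j hF
    have hGg := G.outer_ge i j hG
    cases i with
    | zero => omega
    | succ i' =>
      have hthr' := outer_thr_eq F G (i' + 1)
      rw [thr_succ, thr_succ] at hthr'
      have s1 := F.outer_step (i' + 1) (Nat.succ_ne_zero i') j
      have s2 := G.outer_step (i' + 1) (Nat.succ_ne_zero i') j
      omega
  · have hF : ¬ F.T i j ≠ 0 := fun h => hsupp ((F.outer_supp i j).1 h)
    have hG : ¬ G.T i j ≠ 0 := fun h => hsupp ((G.outer_supp i j).1 h)
    omega

end OuterRow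

end LRFilling

namespace LRFilling

section OuterExists

variable {a : ℕ} {β μ : YoungDiagram}

/-- Number of cells in rows `≥ i`. -/
noncomputable def tailCard (ν : YoungDiagram) (i : ℕ) : ℕ :=
  (ν.cells.filter (fun q => i ≤ q.1)).card

theorem tailCard_split (ν : YoungDiagram) (i : ℕ) :
    tailCard ν i = ν.rowLen i + tailCard ν (i + 1) := by
  have hu : ν.cells.filter (fun q => i ≤ q.1) =
      ν.row i ∪ ν.cells.filter (fun q => i + 1 ≤ q.1) := by
    ext q
    rw [Finset.mem_filter, Finset.mem_union, mem_row_iff, Finset.mem_filter, mem_cells]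
    constructor
    · rintro ⟨h1, h2⟩
      rcases eq_or_lt_of_le h2 with h | h
      · exact Or.inl ⟨h1, h.symm⟩
      · exact Or.inr ⟨(mem_cells q).2 h1, h⟩
    · rintro (⟨h1, h2⟩ | ⟨h1, h2⟩)
      · exact ⟨h1, by omega⟩
      · exact ⟨(mem_cells q).1 h1, by omega⟩
  rw [tailCard, tailCard, hu, Finset.card_union_of_disjoint, ν.rowLen_eq_card]
  rw [Finset.disjoint_left]
  intro q h1 h2
  rw [mem_row_iff] at h1
  rw [Finset.mem_filter] at h2
  omega

theorem tailCard_zero (ν : YoungDiagram) : tailCard ν 0 = ν.card := by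
  rw [tailCard]
  have he : ν.cells.filter (fun q : ℕ × ℕ => 0 ≤ q.1) = ν.cells :=
    Finset.filter_true_of_mem (fun q _ => Nat.zero_le q.1)
  rw [he]

theorem tailCard_le (h : β ≤ μ) (i : ℕ) : tailCard β i ≤ tailCard μ i :=
  Finset.card_le_card
    (Finset.filter_subset_filter _ (YoungDiagram.cells_subset_iff.2 h))

theorem tailCard_strip (h : IsHorizontalStrip β μ) (i : ℕ) :
    tailCard μ (i + 1) ≤ tailCard β i := by
  apply Finset.card_le_card_of_injOn (fun q => (q.1 - 1, q.2))
  · intro q hq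
    rw [Finset.mem_coe, Finset.mem_filter, mem_cells] at hq
    obtain ⟨h1, h2⟩ := hq
    have hlt : q.2 < μ.rowLen q.1 := mem_iff_lt_rowLen.1 h1
    have hstr := h.2 (q.1 - 1)
    rw [show q.1 - 1 + 1 = q.1 by omega] at hstr
    rw [Finset.mem_coe, Finset.mem_filter, mem_cells]
    dsimp only
    exact ⟨mem_iff_lt_rowLen.2 (by omega), by omega⟩
  · intro q1 h1 q2 h2 he
    rw [Finset.mem_coe, Finset.mem_filter] at h1 h2
    have he' : (q1.1 - 1, q1.2) = (q2.1 - 1, q2.2) := he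
    injection he' with e1 e2
    have e3 : q1.1 = q2.1 := by omega
    obtain ⟨a1, b1⟩ := q1
    obtain ⟨a2, b2⟩ := q2
    simp only at e2 e3
    rw [e2, e3]

/-- Threshold sequence for the canonical filling of `μ/(a)` with content `β`. -/
noncomputable def xdef (β μ : YoungDiagram) (i : ℕ) : ℕ := tailCard μ i - tailCard β i

theorem xdef_facts (hstrip : IsHorizontalStrip β μ) (hcard : μ.card = β.card + a) :
    xdef β μ 0 = a ∧
    (∀ i, β.rowLen i + xdef β μ i = μ.rowLen i + xdef β μ (i + 1)) ∧
    (∀ i, xdef β μ i ≤ μ.rowLen i) ∧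
    (∀ i, xdef β μ (i + 1) ≤ xdef β μ i) := by
  have hA := tailCard_split μ
  have hB := tailCard_split β
  have hE := tailCard_strip hstrip
  have hBA := fun i => tailCard_le hstrip.1 i
  have hA0 := tailCard_zero μ
  have hB0 := tailCard_zero β
  have hrl := fun i => rowLen_mono hstrip.1 i
  refine ⟨?_, fun i => ?_, fun i => ?_, fun i => ?_⟩
  · rw [xdef]; omega
  · have h1 := hA i; have h2 := hB i; have h3 := hBA i; have h4 := hBA (i + 1)
    rw [xdef, xdef]; omega
  · have h1 := hA i; have h2 := hE i; have h3 := hBA i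
    rw [xdef]; omega
  · have h1 := hA i; have h2 := hB i; have h3 := hBA (i + 1); have h4 := hrl i
    rw [xdef, xdef]; omega

/-- Entries of the canonical filling of `μ/(a)` with content `β`. -/
noncomputable def outerT (a : ℕ) (β μ : YoungDiagram) : ℕ → ℕ → ℕ := fun i j =>
  if (i, j) ∈ μ ∧ (i = 0 → a ≤ j) then (if j < xdef β μ i then i else i + 1) else 0

variable (hstrip : IsHorizontalStrip β μ) (hcard : μ.card = β.card + a)
include hstrip hcard

theorem outerT_ne_zero (i j : ℕ) :
    outerT a β μ i j ≠ 0 ↔ ((i, j) ∈ μ ∧ (i = 0 → a ≤ j)) := by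
  obtain ⟨hx0, _, _, _⟩ := xdef_facts hstrip hcard
  rw [outerT]
  split_ifs with h1 h2
  · -- j < xdef, value i : nonzero iff i ≠ 0; but i = 0 impossible here
    have hi : i ≠ 0 := by
      rintro rfl
      have := h1.2 rfl
      omega
    exact iff_of_true hi h1
  · exact iff_of_true (by omega) h1
  · exact iff_of_false (by omega) h1

theorem outerT_val_iff (v r j : ℕ) :
    outerT a β μ r j = v + 1 ↔
      ((r = v ∧ xdef β μ v ≤ j ∧ j < μ.rowLen v) ∨ (r = v + 1 ∧ j < xdef β μ (v + 1))) := by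
  obtain ⟨hx0, hkey, hxle, hxmono⟩ := xdef_facts hstrip hcard
  rw [outerT]
  by_cases h1 : (r, j) ∈ μ ∧ (r = 0 → a ≤ j)
  · rw [if_pos h1]
    have hmem : j < μ.rowLen r := mem_iff_lt_rowLen.1 h1.1
    by_cases h2 : j < xdef β μ r
    · rw [if_pos h2]
      constructor
      · intro h
        exact Or.inr ⟨h, by rw [← h]; exact h2⟩
      · rintro (⟨hrv, hj1, hj2⟩ | ⟨hrv, hj⟩)
        · exfalso
          rw [hrv] at h2
          omega
        · exact hrv
    · rw [if_neg h2]
      constructor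
      · intro h
        have hrv : r = v := by omega
        subst hrv
        exact Or.inl ⟨rfl, by omega, hmem⟩
      · rintro (⟨hrv, hj1, hj2⟩ | ⟨hrv, hj⟩)
        · omega
        · exfalso
          rw [← hrv] at hj
          omega
  · rw [if_neg h1]
    constructor
    · intro h
      omega
    · rintro (⟨hrv, hj1, hj2⟩ | ⟨hrv, hj⟩)
      · exfalso
        apply h1
        subst hrv
        refine ⟨mem_iff_lt_rowLen.2 hj2, fun h0 => ?_⟩
        subst h0
        omega
      · exfalso
        apply h1
        subst hrv
        have := hxle (v + 1)
        exact ⟨mem_iff_lt_rowLen.2 (by omega), fun h0 => by omega⟩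

theorem outerT_finite (Q : ℕ × ℕ → Prop) (h : ∀ q, Q q → outerT a β μ q.1 q.2 ≠ 0) :
    Finite {q : ℕ × ℕ // Q q} := by
  have hsub : {q : ℕ × ℕ | Q q} ⊆ ↑μ.cells := by
    intro q hq
    have := ((outerT_ne_zero hstrip hcard q.1 q.2).1 (h q hq)).1
    exact Finset.mem_coe.2 ((mem_cells _).2 this)
  exact (Set.Finite.subset μ.cells.finite_toSet hsub).to_subtype

omit hstrip hcard in
theorem rowDiagram_le (hstrip : IsHorizontalStrip β μ) (hcard : μ.card = β.card + a) :
    rowDiagram a ≤ μ := by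
  obtain ⟨hx0, _, hxle, _⟩ := xdef_facts hstrip hcard
  intro q hq
  have h1 : q ∈ rowDiagram a := hq
  rw [mem_rowDiagram] at h1
  have := hxle 0
  have h2 : (q.1, q.2) ∈ μ := mem_iff_lt_rowLen.2 (by rw [h1.1]; omega)
  exact h2

/-- The canonical LR filling of the skew shape `μ/(a)` with content `β`, for
`μ/β` a horizontal strip of size `a`. -/
noncomputable def ofOuter (hstrip : IsHorizontalStrip β μ) (hcard : μ.card = β.card + a) :
    LRFilling (rowDiagram a) β μ := by
  obtain ⟨hx0, hkey, hxle, hxmono⟩ := xdef_facts hstrip hcard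
  refine
  { sub := rowDiagram_le hstrip hcard
    T := outerT a β μ
    supp := fun i j => ?_
    rows_weak := fun i j₁ j₂ hj h1 h2 => ?_
    cols_strict := fun i₁ i₂ j hi h1 h2 => ?_
    content := fun v => ?_
    ballot := fun i j k => ?_ }
  · rw [outerT_ne_zero hstrip hcard]
    constructor
    · rintro ⟨h1, h2⟩
      refine ⟨h1, fun hm => ?_⟩
      rw [mem_rowDiagram] at hm
      have := h2 hm.1
      omega
    · rintro ⟨h1, h2⟩
      refine ⟨h1, fun h0 => ?_⟩
      by_contra hja
      push_neg at hja
      exact h2 (mem_rowDiagram.2 ⟨h0, by omega⟩)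
  · -- rows weakly increasing
    simp only [outerT] at h1 h2 ⊢
    split_ifs at h1 h2 ⊢ <;> omega
  · -- columns strictly increasing
    by_cases h12 : i₂ = i₁ + 1
    · subst h12
      have hm := hxmono i₁
      simp only [outerT] at h1 h2 ⊢
      split_ifs at h1 h2 ⊢ <;> omega
    · simp only [outerT] at h1 h2 ⊢
      split_ifs at h1 h2 ⊢ <;> omega
  · -- content
    rw [nat_card_eq_filter _ μ.cells (fun q hq =>
      (mem_cells _).2 (((outerT_ne_zero hstrip hcard q.1 q.2).1 (by omega)).1))]
    have hfe : (μ.cells.filter fun q : ℕ × ℕ => outerT a β μ q.1 q.2 = v + 1) =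
        ((Finset.Ico (xdef β μ v) (μ.rowLen v)).image (fun j => (v, j))) ∪
        ((Finset.range (xdef β μ (v + 1))).image (fun j => (v + 1, j))) := by
      ext ⟨r, j⟩
      rw [Finset.mem_filter, Finset.mem_union, mem_cells]
      constructor
      · rintro ⟨hmem, hT⟩
        rcases (outerT_val_iff hstrip hcard v r j).1 hT with ⟨rfl, hj1, hj2⟩ | ⟨rfl, hj⟩
        · exact Or.inl (Finset.mem_image.2 ⟨j, Finset.mem_Ico.2 ⟨hj1, hj2⟩, rfl⟩)
        · exact Or.inr (Finset.mem_image.2 ⟨j, Finset.mem_range.2 hj, rfl⟩)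
      · rintro (h | h)
        · obtain ⟨rfl, hj⟩ := mem_image_pair h
          rw [Finset.mem_Ico] at hj
          exact ⟨mem_iff_lt_rowLen.2 hj.2,
            (outerT_val_iff hstrip hcard v v j).2 (Or.inl ⟨rfl, hj.1, hj.2⟩)⟩
        · obtain ⟨rfl, hj⟩ := mem_image_pair h
          rw [Finset.mem_range] at hj
          have := hxle (v + 1)
          exact ⟨mem_iff_lt_rowLen.2 (by omega),
            (outerT_val_iff hstrip hcard v (v + 1) j).2 (Or.inr ⟨rfl, hj⟩)⟩
    rw [hfe, Finset.card_union_of_disjoint, Finset.card_image_of_injective _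
        (fun x y h => congrArg Prod.snd h),
      Finset.card_image_of_injective _ (fun x y h => congrArg Prod.snd h),
      Nat.card_Ico, Finset.card_range]
    · have h1 := hkey v
      have h2 := hxle v
      omega
    · rw [Finset.disjoint_left]
      rintro ⟨r, j⟩ h1 h2
      have e1 := (mem_image_pair h1).1
      have e2 := (mem_image_pair h2).1
      omega
  · -- ballot, via an explicit injection
    have hfin : Finite {q : ℕ × ℕ // (q.1 < i ∨ (q.1 = i ∧ j ≤ q.2)) ∧
        outerT a β μ q.1 q.2 = k + 1} :=
      outerT_finite hstrip hcard _ (fun q hq => by omega)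
    set g : ℕ × ℕ → ℕ × ℕ := fun q =>
      if q.1 = k + 2 then (k + 1, q.2) else (k, q.2 + xdef β μ k - xdef β μ (k + 1)) with hg
    have hmap : ∀ q : ℕ × ℕ, ((q.1 < i ∨ (q.1 = i ∧ j ≤ q.2)) ∧ outerT a β μ q.1 q.2 = k + 2) →
        (((g q).1 < i ∨ ((g q).1 = i ∧ j ≤ (g q).2)) ∧ outerT a β μ (g q).1 (g q).2 = k + 1) := by
      rintro ⟨r, c⟩ ⟨hR, hT⟩
      rcases (outerT_val_iff hstrip hcard (k + 1) r c).1 hT with ⟨rfl, hc1, hc2⟩ | ⟨rfl, hc⟩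
      · -- r = k + 1, tail of row k+1, maps to (k, c + x k - x (k+1))
        have hgq : g (k + 1, c) = (k, c + xdef β μ k - xdef β μ (k + 1)) := by
          rw [hg]; simp
        rw [hgq]
        have h1 := hkey k
        have h2 := hstrip.2 k
        have h3 := hxmono k
        constructor
        · left; dsimp only; omega
        · apply (outerT_val_iff hstrip hcard k k _).2
          left
          exact ⟨rfl, by omega, by omega⟩
      · -- r = k + 2, head of row k+2, maps to (k+1, c)
        have hgq : g (k + 2, c) = (k + 1, c) := by rw [hg]; simp
        rw [hgq]
        have h3 := hxmono (k + 1)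
        constructor
        · left; dsimp only; omega
        · apply (outerT_val_iff hstrip hcard k (k + 1) c).2
          right
          exact ⟨rfl, by omega⟩
    have hinj : Function.Injective (fun s : {q : ℕ × ℕ // (q.1 < i ∨ (q.1 = i ∧ j ≤ q.2)) ∧
        outerT a β μ q.1 q.2 = k + 2} =>
        (⟨g s.1, hmap s.1 s.2⟩ : {q : ℕ × ℕ // (q.1 < i ∨ (q.1 = i ∧ j ≤ q.2)) ∧
          outerT a β μ q.1 q.2 = k + 1})) := by
      rintro ⟨⟨r1, c1⟩, hs1⟩ ⟨⟨r2, c2⟩, hs2⟩ he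
      have hval : g (r1, c1) = g (r2, c2) := congrArg Subtype.val he
      apply Subtype.ext
      have hv1 := (outerT_val_iff hstrip hcard (k + 1) r1 c1).1 hs1.2
      have hv2 := (outerT_val_iff hstrip hcard (k + 1) r2 c2).1 hs2.2
      have hge1 : r1 = k + 1 → xdef β μ (k + 1) ≤ c1 := by rintro rfl; rcases hv1 with h | h <;> omega
      have hge2 : r2 = k + 1 → xdef β μ (k + 1) ≤ c2 := by rintro rfl; rcases hv2 with h | h <;> omega
      have hr1 : r1 = k + 1 ∨ r1 = k + 2 := by rcases hv1 with h | h <;> omega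
      have hr2 : r2 = k + 1 ∨ r2 = k + 2 := by rcases hv2 with h | h <;> omega
      rcases hr1 with rfl | rfl <;> rcases hr2 with rfl | rfl
      · rw [hg] at hval
        simp only [show ¬ (k + 1 = k + 2) by omega, if_false] at hval
        have := congrArg Prod.snd hval
        dsimp only at this
        have e1 := hge1 rfl
        have e2 := hge2 rfl
        have ec : c1 = c2 := by omega
        exact congrArg (Prod.mk (k + 1)) ec
      · rw [hg] at hval
        simp only [show ¬ (k + 1 = k + 2) by omega, if_false, if_pos] at hval
        have := congrArg Prod.fst hval
        simp at this
      · rw [hg] at hval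
        simp only [show ¬ (k + 1 = k + 2) by omega, if_false, if_pos] at hval
        have := congrArg Prod.fst hval
        simp at this
      · rw [hg] at hval
        simp only [if_pos] at hval
        have ec : c1 = c2 := congrArg Prod.snd hval
        exact congrArg (Prod.mk (k + 2)) ec
    exact Nat.card_le_card_of_injective _ hinj

end OuterExists

end LRFilling

namespace LRFilling

theorem rowShape_alpha' {α γ : YoungDiagram} {p : ℕ} (F : LRFilling α γ (rowDiagram p)) :
    α = rowDiagram α.card := by
  rw [F.rowShape_alpha_card]
  exact F.rowShape_alpha

theorem pieri_aux {μ lam : YoungDiagram} {p : ℕ}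
    (x : Σ α β γ : YoungDiagram,
      (LRFilling α β μ × LRFilling α γ (rowDiagram p) × LRFilling β γ lam)) :
    IsHorizontalStrip x.2.1 μ ∧ IsHorizontalStrip x.2.1 lam ∧
    2 * ((μ.card : ℤ) - (x.2.1.card : ℤ)) = (μ.card : ℤ) + (p : ℤ) - (lam.card : ℤ) ∧
    2 * ((lam.card : ℤ) - (x.2.1.card : ℤ)) = (lam.card : ℤ) + (p : ℤ) - (μ.card : ℤ) := by
  obtain ⟨α, β, γ, F1, F2, F3⟩ := x
  dsimp only
  have hα : α = rowDiagram α.card := F2.rowShape_alpha'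
  have hγ : γ = rowDiagram (p - α.card) := F2.rowShape_gamma
  have hap : α.card ≤ p := F2.rowShape_card_le
  rw [hα] at F1
  have h1 : IsHorizontalStrip β μ := F1.outer_strip
  have h2 : μ.card = β.card + α.card := F1.outer_card
  rw [hγ] at F3
  have h3 : IsHorizontalStrip β lam := F3.rowContent_strip
  have h4 : lam.card = β.card + (p - α.card) := F3.rowContent_card
  exact ⟨h1, h3, by omega, by omega⟩

end LRFilling

open LRFilling in
theorem NL_pieri' (μ lam : YoungDiagram) (p : ℕ) :
    NL μ (rowDiagram p) lam =
      Nat.card {β : YoungDiagram //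
        IsHorizontalStrip β μ ∧ IsHorizontalStrip β lam ∧
        2 * ((μ.card : ℤ) - (β.card : ℤ)) = (μ.card : ℤ) + (p : ℤ) - (lam.card : ℤ) ∧
        2 * ((lam.card : ℤ) - (β.card : ℤ)) = (lam.card : ℤ) + (p : ℤ) - (μ.card : ℤ)} := by
  rw [NL]
  apply Nat.card_congr
  refine Equiv.ofBijective (fun x => ⟨x.2.1, pieri_aux x⟩) ⟨?_, ?_⟩
  · rintro ⟨α₁, β₁, γ₁, F1, F2, F3⟩ ⟨α₂, β₂, γ₂, G1, G2, G3⟩ he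
    have hb : β₁ = β₂ := congrArg Subtype.val he
    subst hb
    have e1 : α₁ = rowDiagram α₁.card := F2.rowShape_alpha'
    have e2 : α₂ = rowDiagram α₂.card := G2.rowShape_alpha'
    have c1 : μ.card = β₁.card + α₁.card := by
      have F1' := F1
      rw [e1] at F1'
      exact F1'.outer_card
    have c2 : μ.card = β₁.card + α₂.card := by
      have G1' := G1
      rw [e2] at G1'
      exact G1'.outer_card
    have hcc : α₁.card = α₂.card := by omega
    have hα : α₁ = α₂ := by rw [e1, e2, hcc]
    subst hα
    have g1 : γ₁ = rowDiagram (p - α₁.card) := F2.rowShape_gamma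
    have g2 : γ₂ = rowDiagram (p - α₁.card) := G2.rowShape_gamma
    have hγ : γ₁ = γ₂ := by rw [g1, g2]
    subst hγ
    have hF1 : F1 = G1 := outer_unique e1 F1 G1
    have hF2 : F2 = G2 := rowShape_unique F2 G2
    have hF3 : F3 = G3 := rowContent_unique g1 F3 G3
    rw [hF1, hF2, hF3]
  · rintro ⟨β, hb1, hb2, hb3, hb4⟩
    have hbm : β.card ≤ μ.card := card_mono hb1.1
    have hbl : β.card ≤ lam.card := card_mono hb2.1
    obtain ⟨aa, ha⟩ : ∃ aa, μ.card = β.card + aa := ⟨μ.card - β.card, by omega⟩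
    obtain ⟨cc, hc⟩ : ∃ cc, lam.card = β.card + cc := ⟨lam.card - β.card, by omega⟩
    have hsum : aa + cc = p := by omega
    have hF2 : LRFilling (rowDiagram aa) (rowDiagram cc) (rowDiagram p) := by
      have h := rowRow (a := aa) (p := p) (by omega)
      rw [show p - aa = cc by omega] at h
      exact h
    exact ⟨⟨rowDiagram aa, β, rowDiagram cc, ofOuter hb1 ha, hF2, ofStrip hb2 hc⟩,
      Subtype.ext rfl⟩

/-- Pieri-type rule: `N_{μ,(p),lam}` equals the number of ways to remove
`(|μ|+p-|lam|)/2` boxes from `μ` (no two in the same column) and then add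
`(|lam|+p-|μ|)/2` boxes (no two in the same column) to obtain `lam`; i.e. the number of
intermediate partitions `β` with `μ/β` and `lam/β` horizontal strips of those sizes. -/
theorem NL_pieri (μ lam : YoungDiagram) (p : ℕ) :
    NL μ (rowDiagram p) lam =
      Nat.card {β : YoungDiagram //
        IsHorizontalStrip β μ ∧ IsHorizontalStrip β lam ∧
        2 * ((μ.card : ℤ) - (β.card : ℤ)) = (μ.card : ℤ) + (p : ℤ) - (lam.card : ℤ) ∧
        2 * ((lam.card : ℤ) - (β.card : ℤ)) = (lam.card : ℤ) + (p : ℤ) - (μ.card : ℤ)} := by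
  exact NL_pieri' μ lam p
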